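/- Let X and Y each admit a countable coinitial subset, let M be a pointwise finite-dimensional weakly exact persistence module over X×Y, and let R = (l⁺∩r⁻)×(b⁺∩t⁻) be a rectangle such that Ker⁺_{r,s} ∩ Ker⁺_{t,s} ⊆ Im⁺_{R,s} for all s ∈ R. Then there exists a vector subspace W of L⁺ := lim_{u∈R} V⁺_{R,u}(M) (inverse limit with projections π_u) that is a complement of L⁻ := ⋂_{u∈R} π_u⁻¹(V⁻_{R,u}(M)) in L⁺, such that the family of subspaces defined by (M_R)_u = π_u(W) for u ∈ R and (M_R)_u = 0 otherwise is a submodule of M, i.e. ρ_s^u((M_R)_s) ⊆ (M_R)_u for all s ≤ u in X×Y. -/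

import Mathlib

open CategoryTheory

attribute [local instance 10000] Preorder.smallCategory

attribute [local instance] Classical.propDecidable

abbrev PersistenceModule (K : Type) [Field K] (P : Type) [Preorder P] := P ⥤ ModuleCat.{0} K

variable (K : Type) [Field K]

/-- The internal linear map of a persistence module associated to `s ≤ t`. -/
def rho {P : Type} [Preorder P] (M : PersistenceModule K P) {s t : P} (h : s ≤ t) :
    M.obj s →ₗ[K] M.obj t :=
  (M.map (homOfLE h)).hom

def Pfd {P : Type} [Preorder P] (M : PersistenceModule K P) : Prop :=
  ∀ p : P, FiniteDimensional K (M.obj p)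

def IsConvexSet {P : Type} [Preorder P] (S : Set P) : Prop :=
  ∀ ⦃p s q : P⦄, p ≤ s → s ≤ q → p ∈ S → q ∈ S → s ∈ S

def IsConnectedSet {P : Type} [Preorder P] (S : Set P) : Prop :=
  ∀ p ∈ S, ∀ q ∈ S,
    Relation.ReflTransGen (fun a b => a ∈ S ∧ b ∈ S ∧ (a ≤ b ∨ b ≤ a)) p q

def IsIntervalSet {P : Type} [Preorder P] (S : Set P) : Prop :=
  IsConvexSet S ∧ IsConnectedSet S

def IsRectangleSet {X Y : Type} [Preorder X] [Preorder Y] (R : Set (X × Y)) : Prop :=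
  ∃ (I : Set X) (J : Set Y), IsIntervalSet I ∧ IsIntervalSet J ∧ R = I ×ˢ J

/-- The direct sum of the interval (indicator) modules of a family of convex sets. -/
noncomputable def intervalDirectSum {P : Type} [Preorder P] {ι : Type} (S : ι → Set P)
    (hS : ∀ i, IsConvexSet (S i)) : PersistenceModule K P where
  obj t := ModuleCat.of K ({i : ι // t ∈ S i} → K)
  map {s t} _ :=
    ModuleCat.ofHom (LinearMap.pi (fun j : {i : ι // t ∈ S i} =>
      if hs : (s : P) ∈ S j.1 then LinearMap.proj (⟨j.1, hs⟩ : {i : ι // s ∈ S i}) else 0))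
  map_id t := by
    refine ModuleCat.hom_ext (LinearMap.ext fun v => funext fun j => ?_)
    show ((if hs : (t : P) ∈ S j.1 then
        LinearMap.proj (⟨j.1, hs⟩ : {i : ι // t ∈ S i}) else 0 :
          ({i : ι // t ∈ S i} → K) →ₗ[K] K)) v = v j
    rw [dif_pos j.2]
    rfl
  map_comp {s t u} f g := by
    refine ModuleCat.hom_ext (LinearMap.ext fun v => funext fun j => ?_)
    show ((if hs : (s : P) ∈ S j.1 then
        LinearMap.proj (⟨j.1, hs⟩ : {i : ι // s ∈ S i}) else 0 :
          ({i : ι // s ∈ S i} → K) →ₗ[K] K)) v =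
      ((if ht : (t : P) ∈ S j.1 then
        LinearMap.proj (⟨j.1, ht⟩ : {i : ι // t ∈ S i}) else 0 :
          ({i : ι // t ∈ S i} → K) →ₗ[K] K))
        (LinearMap.pi (fun j' : {i : ι // t ∈ S i} =>
          (if hs : (s : P) ∈ S j'.1 then
            LinearMap.proj (⟨j'.1, hs⟩ : {i : ι // s ∈ S i}) else 0 :
              ({i : ι // s ∈ S i} → K) →ₗ[K] K)) v)
    by_cases hs : (s : P) ∈ S j.1
    · have ht : (t : P) ∈ S j.1 := hS j.1 (leOfHom f) (leOfHom g) hs j.2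
      rw [dif_pos hs, dif_pos ht, LinearMap.proj_apply, LinearMap.proj_apply,
        LinearMap.pi_apply, dif_pos hs]
      rfl
    · by_cases ht : (t : P) ∈ S j.1
      · rw [dif_neg hs, dif_pos ht, LinearMap.zero_apply, LinearMap.proj_apply,
          LinearMap.pi_apply, dif_neg hs, LinearMap.zero_apply]
      · rw [dif_neg hs, dif_neg ht, LinearMap.zero_apply, LinearMap.zero_apply]

def InDec {P : Type} [Preorder P] (M : PersistenceModule K P) (𝒮 : Set (Set P)) : Prop :=
  ∃ (ι : Type) (S : ι → Set P) (hS : ∀ i, IsConvexSet (S i)),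
    (∀ i, S i ∈ 𝒮) ∧ (∀ t : P, {i | t ∈ S i}.Finite) ∧
      Nonempty (M ≅ intervalDirectSum K S hS)

def restrictMod {P : Type} [Preorder P] (M : PersistenceModule K P) (Q : Set P) :
    PersistenceModule K ↥Q :=
  (show Monotone (Subtype.val : ↥Q → P) from fun _ _ h => h).functor ⋙ M

def restrictClass {P : Type} (𝒮 : Set (Set P)) (Q : Set P) : Set (Set ↥Q) :=
  {T | ∃ S ∈ 𝒮, T = Subtype.val ⁻¹' S}

/-- Weak exactness of a persistence bimodule. -/
def WeaklyExact {X Y : Type} [Preorder X] [Preorder Y]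
    (M : PersistenceModule K (X × Y)) : Prop :=
  ∀ (s t : X × Y) (h : s ≤ t),
    (LinearMap.range (rho K M h) =
      LinearMap.range (rho K M (show (t.1, s.2) ≤ t from ⟨le_rfl, h.2⟩)) ⊓
      LinearMap.range (rho K M (show (s.1, t.2) ≤ t from ⟨h.1, le_rfl⟩))) ∧
    (LinearMap.ker (rho K M h) =
      LinearMap.ker (rho K M (show s ≤ (t.1, s.2) from ⟨h.1, le_rfl⟩)) ⊔
      LinearMap.ker (rho K M (show s ≤ (s.1, t.2) from ⟨le_rfl, h.2⟩)))

/-! ## Cuts, rectangles via cuts, and the functorial filtration -/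

/-- A cut of a totally ordered set: a partition into a lower and an upper part. -/
structure Cut (X : Type) [LinearOrder X] where
  lower : Set X
  upper : Set X
  union_eq : lower ∪ upper = Set.univ
  lt : ∀ x ∈ lower, ∀ y ∈ upper, x < y

theorem Cut.mem_upper_of_le {X : Type} [LinearOrder X] (c : Cut X) {a b : X}
    (ha : a ∈ c.upper) (h : a ≤ b) : b ∈ c.upper := by
  have hb : b ∈ c.lower ∪ c.upper := by rw [c.union_eq]; trivial
  rcases hb with hb | hb
  · exact absurd (c.lt b hb a ha) (not_lt.2 h)
  · exact hb

theorem Cut.mem_lower_of_le {X : Type} [LinearOrder X] (c : Cut X) {a b : X}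
    (hb : b ∈ c.lower) (h : a ≤ b) : a ∈ c.lower := by
  have hb' : a ∈ c.lower ∪ c.upper := by rw [c.union_eq]; trivial
  rcases hb' with hb' | hb'
  · exact hb'
  · exact absurd (c.lt b hb a hb') (not_lt.2 h)

/-- The rectangle `(l⁺ ∩ r⁻) × (b⁺ ∩ t⁻)` associated to four cuts. -/
def rectOf {X Y : Type} [LinearOrder X] [LinearOrder Y]
    (l r : Cut X) (b t : Cut Y) : Set (X × Y) :=
  (l.upper ∩ r.lower) ×ˢ (b.upper ∩ t.lower)

theorem isConvex_rectOf {X Y : Type} [LinearOrder X] [LinearOrder Y]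
    (l r : Cut X) (b t : Cut Y) : IsConvexSet (rectOf l r b t) := by
  rintro p s q hps hsq ⟨⟨hp1, hp2⟩, hp3, hp4⟩ ⟨⟨hq1, hq2⟩, hq3, hq4⟩
  exact ⟨⟨l.mem_upper_of_le hp1 hps.1, r.mem_lower_of_le hq2 hsq.1⟩,
    b.mem_upper_of_le hp3 hps.2, t.mem_lower_of_le hq4 hsq.2⟩

/-- The upset `R⁺` of a subset of a poset. -/
def upsetOf {P : Type} [Preorder P] (R : Set P) : Set P := {u | ∃ s ∈ R, s ≤ u}

theorem isConvex_upsetOf {P : Type} [Preorder P] (R : Set P) : IsConvexSet (upsetOf R) := by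
  rintro p s q hps _ ⟨w, hw, hwp⟩ _
  exact ⟨w, hw, hwp.trans hps⟩

theorem IsConvexSet.inter {P : Type} [Preorder P] {A B : Set P}
    (hA : IsConvexSet A) (hB : IsConvexSet B) : IsConvexSet (A ∩ B) := by
  rintro p s q hps hsq ⟨hpA, hpB⟩ ⟨hqA, hqB⟩
  exact ⟨hA hps hsq hpA hqA, hB hps hsq hpB hqB⟩

variable {X Y : Type} [LinearOrder X] [LinearOrder Y]

/-- Horizontal image space `Im⁺_{l,u}`. -/
noncomputable def ImPlusH (M : PersistenceModule K (X × Y)) (l : Cut X) (u : X × Y) :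
    Submodule K (M.obj u) :=
  ⨅ (x : X) (h : x ∈ l.upper ∧ x ≤ u.1),
    LinearMap.range (rho K M (show (x, u.2) ≤ u from ⟨h.2, le_rfl⟩))

/-- Horizontal image space `Im⁻_{l,u}`. -/
noncomputable def ImMinusH (M : PersistenceModule K (X × Y)) (l : Cut X) (u : X × Y) :
    Submodule K (M.obj u) :=
  ⨆ (x : X) (h : x ∈ l.lower ∧ x ≤ u.1),
    LinearMap.range (rho K M (show (x, u.2) ≤ u from ⟨h.2, le_rfl⟩))

/-- Horizontal kernel space `Ker⁺_{r,u}`. -/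
noncomputable def KerPlusH (M : PersistenceModule K (X × Y)) (r : Cut X) (u : X × Y) :
    Submodule K (M.obj u) :=
  ⨅ (x : X) (h : x ∈ r.upper ∧ u.1 ≤ x),
    LinearMap.ker (rho K M (show u ≤ (x, u.2) from ⟨h.2, le_rfl⟩))

/-- Horizontal kernel space `Ker⁻_{r,u}`. -/
noncomputable def KerMinusH (M : PersistenceModule K (X × Y)) (r : Cut X) (u : X × Y) :
    Submodule K (M.obj u) :=
  ⨆ (x : X) (h : x ∈ r.lower ∧ u.1 ≤ x),
    LinearMap.ker (rho K M (show u ≤ (x, u.2) from ⟨h.2, le_rfl⟩))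

/-- Vertical image space `Im⁺_{b,u}`. -/
noncomputable def ImPlusV (M : PersistenceModule K (X × Y)) (b : Cut Y) (u : X × Y) :
    Submodule K (M.obj u) :=
  ⨅ (y : Y) (h : y ∈ b.upper ∧ y ≤ u.2),
    LinearMap.range (rho K M (show (u.1, y) ≤ u from ⟨le_rfl, h.2⟩))

/-- Vertical image space `Im⁻_{b,u}`. -/
noncomputable def ImMinusV (M : PersistenceModule K (X × Y)) (b : Cut Y) (u : X × Y) :
    Submodule K (M.obj u) :=
  ⨆ (y : Y) (h : y ∈ b.lower ∧ y ≤ u.2),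
    LinearMap.range (rho K M (show (u.1, y) ≤ u from ⟨le_rfl, h.2⟩))

/-- Vertical kernel space `Ker⁺_{t,u}`. -/
noncomputable def KerPlusV (M : PersistenceModule K (X × Y)) (t : Cut Y) (u : X × Y) :
    Submodule K (M.obj u) :=
  ⨅ (y : Y) (h : y ∈ t.upper ∧ u.2 ≤ y),
    LinearMap.ker (rho K M (show u ≤ (u.1, y) from ⟨le_rfl, h.2⟩))

/-- Vertical kernel space `Ker⁻_{t,u}`. -/
noncomputable def KerMinusV (M : PersistenceModule K (X × Y)) (t : Cut Y) (u : X × Y) :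
    Submodule K (M.obj u) :=
  ⨆ (y : Y) (h : y ∈ t.lower ∧ u.2 ≤ y),
    LinearMap.ker (rho K M (show u ≤ (u.1, y) from ⟨le_rfl, h.2⟩))

/-- `Im⁺_{R,u}`. -/
noncomputable def ImPlusR (M : PersistenceModule K (X × Y)) (l : Cut X) (b : Cut Y)
    (u : X × Y) : Submodule K (M.obj u) :=
  ImPlusH K M l u ⊓ ImPlusV K M b u

/-- `Im⁻_{R,u}`. -/
noncomputable def ImMinusR (M : PersistenceModule K (X × Y)) (l : Cut X) (b : Cut Y)
    (u : X × Y) : Submodule K (M.obj u) :=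
  (ImMinusH K M l u ⊔ ImMinusV K M b u) ⊓ ImPlusR K M l b u

/-- `Ker⁺_{R,u}`. -/
noncomputable def KerPlusR (M : PersistenceModule K (X × Y)) (r : Cut X) (t : Cut Y)
    (u : X × Y) : Submodule K (M.obj u) :=
  (KerPlusH K M r u ⊔ KerMinusV K M t u) ⊓ (KerMinusH K M r u ⊔ KerPlusV K M t u)

/-- `Ker⁻_{R,u}`. -/
noncomputable def KerMinusR (M : PersistenceModule K (X × Y)) (r : Cut X) (t : Cut Y)
    (u : X × Y) : Submodule K (M.obj u) :=
  KerMinusH K M r u ⊔ KerMinusV K M t u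

/-- The pointwise functorial filtration `V⁺_{R,u}(M)` (meaningful for `u ∈ R`). -/
noncomputable def VplusAt (M : PersistenceModule K (X × Y)) (l r : Cut X) (b t : Cut Y)
    (u : X × Y) : Submodule K (M.obj u) :=
  ImPlusR K M l b u ⊓ KerPlusR K M r t u

/-- The pointwise functorial filtration `V⁻_{R,u}(M)` (meaningful for `u ∈ R`). -/
noncomputable def VminusAt (M : PersistenceModule K (X × Y)) (l r : Cut X) (b t : Cut Y)
    (u : X × Y) : Submodule K (M.obj u) :=
  ImPlusR K M l b u ⊓ KerMinusR K M r t u ⊔ ImMinusR K M l b u ⊓ KerPlusR K M r t u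

/-- The extension of `V⁺_R(M)` to a family of subspaces over all of `X × Y`
(equal to `⋃_{s ∈ R, s ≤ u} ρ_s^u(V⁺_{R,s})` on the upset of `R` and `0` elsewhere). -/
noncomputable def VplusSub (M : PersistenceModule K (X × Y)) (l r : Cut X) (b t : Cut Y)
    (u : X × Y) : Submodule K (M.obj u) :=
  ⨆ (s : X × Y) (h : s ∈ rectOf l r b t ∧ s ≤ u),
    Submodule.map (rho K M h.2) (VplusAt K M l r b t s)

/-- The extension of `V⁻_R(M)` to a family of subspaces over all of `X × Y`. -/
noncomputable def VminusSub (M : PersistenceModule K (X × Y)) (l r : Cut X) (b t : Cut Y)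
    (u : X × Y) : Submodule K (M.obj u) :=
  ⨆ (s : X × Y) (h : s ∈ rectOf l r b t ∧ s ≤ u),
    Submodule.map (rho K M h.2) (VminusAt K M l r b t s)

theorem rho_comp {P : Type} [Preorder P] (M : PersistenceModule K P) {p q r : P}
    (h1 : p ≤ q) (h2 : q ≤ r) :
    (rho K M h2).comp (rho K M h1) = rho K M (h1.trans h2) := by
  rw [rho, rho, rho, ← homOfLE_comp h1 h2, M.map_comp]
  rfl

/-- The subfunctor of a persistence module determined by a compatible family of subspaces. -/
noncomputable def subfunctor {P : Type} [Preorder P] (M : PersistenceModule K P)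
    (S : ∀ p, Submodule K (M.obj p))
    (hS : ∀ (p q : P) (h : p ≤ q), (S p).map (rho K M h) ≤ S q) :
    PersistenceModule K P where
  obj p := ModuleCat.of K ↥(S p)
  map {p q} f :=
    ModuleCat.ofHom ((rho K M (leOfHom f)).restrict
      (p := S p) (q := S q) (fun x hx => hS p q (leOfHom f) ⟨x, hx, rfl⟩))
  map_id p := by
    refine ModuleCat.hom_ext (LinearMap.ext fun x => Subtype.ext ?_)
    show (M.map (𝟙 p)).hom x.1 = x.1
    rw [M.map_id]
    rfl
  map_comp {p q r} f g := by
    refine ModuleCat.hom_ext (LinearMap.ext fun x => Subtype.ext ?_)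
    show (M.map (homOfLE ((leOfHom f).trans (leOfHom g)))).hom x.1 =
      (M.map (homOfLE (leOfHom g))).hom ((M.map (homOfLE (leOfHom f))).hom x.1)
    rw [← homOfLE_comp (leOfHom f) (leOfHom g), M.map_comp]
    rfl

theorem vplusSub_mapsTo (M : PersistenceModule K (X × Y)) (l r : Cut X) (b t : Cut Y) :
    ∀ (p q : X × Y) (h : p ≤ q),
      Submodule.map (rho K M h) (VplusSub K M l r b t p) ≤ VplusSub K M l r b t q := by
  intro p q h
  rw [VplusSub, Submodule.map_iSup]
  refine iSup_le fun s => ?_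
  rw [Submodule.map_iSup]
  refine iSup_le fun hs => ?_
  rw [← Submodule.map_comp, rho_comp K M hs.2 h]
  exact le_iSup_of_le s (le_iSup_of_le ⟨hs.1, hs.2.trans h⟩ le_rfl)

theorem vminusSub_mapsTo (M : PersistenceModule K (X × Y)) (l r : Cut X) (b t : Cut Y) :
    ∀ (p q : X × Y) (h : p ≤ q),
      Submodule.map (rho K M h) (VminusSub K M l r b t p) ≤ VminusSub K M l r b t q := by
  intro p q h
  rw [VminusSub, Submodule.map_iSup]
  refine iSup_le fun s => ?_
  rw [Submodule.map_iSup]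
  refine iSup_le fun hs => ?_
  rw [← Submodule.map_comp, rho_comp K M hs.2 h]
  exact le_iSup_of_le s (le_iSup_of_le ⟨hs.1, hs.2.trans h⟩ le_rfl)

/-- The submodule `V⁺_R(M)` of `M`, as a persistence module. -/
noncomputable def VplusMod (M : PersistenceModule K (X × Y)) (l r : Cut X) (b t : Cut Y) :
    PersistenceModule K (X × Y) :=
  subfunctor K M (VplusSub K M l r b t) (vplusSub_mapsTo K M l r b t)

/-- The submodule `V⁻_R(M)` of `M`, as a persistence module. -/
noncomputable def VminusMod (M : PersistenceModule K (X × Y)) (l r : Cut X) (b t : Cut Y) :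
    PersistenceModule K (X × Y) :=
  subfunctor K M (VminusSub K M l r b t) (vminusSub_mapsTo K M l r b t)

/-- The relation `R' σ R` on rectangles, expressed on cut decompositions. -/
def SigmaRel (l' r' : Cut X) (b' t' : Cut Y) (l r : Cut X) (b t : Cut Y) : Prop :=
  l'.lower ⊆ l.lower ∧ b'.lower ⊆ b.lower ∧
    (r'.lower ⊂ r.lower ∨ t'.lower ⊂ t.lower ∨
      (r'.lower ⊆ r.lower ∧ t'.lower ⊆ t.lower))

/-- The relation `R' σ̊ R`: `R' σ R` and `R' ≠ R`. -/
def SigmaRelStrict (l' r' : Cut X) (b' t' : Cut Y) (l r : Cut X) (b t : Cut Y) : Prop :=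
  SigmaRel l' r' b' t' l r b t ∧ rectOf l' r' b' t' ≠ rectOf l r b t

/-- The interval (indicator) module of a single convex set. -/
noncomputable abbrev singleIntervalModule {P : Type} [Preorder P] (S : Set P)
    (hS : IsConvexSet S) : PersistenceModule K P :=
  intervalDirectSum K (fun _ : PUnit => S) (fun _ => hS)

/-! ## Inverse limits of the filtration, counting functor, rectangle filtrates -/

/-- The submodule of compatible sections of a persistence module over a subset of the poset
(the inverse limit of the corresponding restricted system). -/
noncomputable def compatSections {P : Type} [Preorder P] (M : PersistenceModule K P)
    (A : Set P) : Submodule K (∀ u : A, M.obj u.1) where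
  carrier := {v | ∀ (s u : A) (h : s.1 ≤ u.1), rho K M h (v s) = v u}
  add_mem' := by
    intro v w hv hw s u h
    show rho K M h (v s + w s) = v u + w u
    rw [map_add, hv s u h, hw s u h]
  zero_mem' := by
    intro s u h
    show rho K M h 0 = 0
    rw [map_zero]
  smul_mem' := by
    intro c v hv s u h
    show rho K M h (c • v s) = c • v u
    rw [map_smul, hv s u h]

/-- The projection from sections over `A` to the value at a point `u ∈ A`. -/
noncomputable def projAt {P : Type} [Preorder P] (M : PersistenceModule K P)
    (A : Set P) (u : P) (h : u ∈ A) : (∀ v : A, M.obj v.1) →ₗ[K] M.obj u :=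
  LinearMap.proj (⟨u, h⟩ : A)

variable {X Y : Type} [LinearOrder X] [LinearOrder Y]

/-- `L⁺ = lim_{u ∈ R} V⁺_{R,u}(M)`, realized as the compatible sections valued in the
pointwise filtration spaces. -/
noncomputable def limVplus (M : PersistenceModule K (X × Y)) (l r : Cut X) (b t : Cut Y) :
    Submodule K (∀ v : ↥(rectOf l r b t), M.obj v.1) :=
  compatSections K M (rectOf l r b t) ⊓
    Submodule.pi Set.univ (fun v : ↥(rectOf l r b t) => VplusAt K M l r b t v.1)

/-- `L⁻ = ⋂_{u ∈ R} π_u⁻¹(V⁻_{R,u}(M))` inside `L⁺`. -/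
noncomputable def limVminus (M : PersistenceModule K (X × Y)) (l r : Cut X) (b t : Cut Y) :
    Submodule K (∀ v : ↥(rectOf l r b t), M.obj v.1) :=
  limVplus K M l r b t ⊓
    Submodule.pi Set.univ (fun v : ↥(rectOf l r b t) => VminusAt K M l r b t v.1)

/-- The family of subspaces of `M` obtained by projecting a subspace `W` of the sections over
`A`: `u ↦ π_u(W)` for `u ∈ A`, and `0` elsewhere. -/
noncomputable def filtrateFam {P : Type} [Preorder P] (M : PersistenceModule K P) (A : Set P)
    (W : Submodule K (∀ v : A, M.obj v.1)) (u : P) : Submodule K (M.obj u) :=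
  ⨆ (h : u ∈ A), Submodule.map (projAt K M A u h) W

/-- `V⁻_{R,u}(M)` viewed as a submodule of `V⁺_{R,u}(M)`. -/
noncomputable def VminusIn (M : PersistenceModule K (X × Y)) (l r : Cut X) (b t : Cut Y)
    (u : X × Y) : Submodule K ↥(VplusAt K M l r b t u) :=
  Submodule.comap (VplusAt K M l r b t u).subtype (VminusAt K M l r b t u)

/-- The counting functor `C_R(M) = lim_{u ∈ R} V⁺_{R,u}(M) / V⁻_{R,u}(M)`, realized as the
submodule of families of cosets that are compatible under the induced transition maps. -/
noncomputable def countingSpace (M : PersistenceModule K (X × Y)) (l r : Cut X) (b t : Cut Y) :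
    Submodule K (∀ v : ↥(rectOf l r b t),
      (↥(VplusAt K M l r b t v.1) ⧸ VminusIn K M l r b t v.1)) where
  carrier := {q | ∀ (s u : ↥(rectOf l r b t)) (h : s.1 ≤ u.1),
    ∃ w : ↥(VplusAt K M l r b t s.1),
      Submodule.Quotient.mk w = q s ∧
      ∃ hw : rho K M h w.1 ∈ VplusAt K M l r b t u.1,
        Submodule.Quotient.mk (⟨rho K M h w.1, hw⟩ : ↥(VplusAt K M l r b t u.1)) = q u}
  zero_mem' := by
    intro s u h
    have hmem : rho K M h ((0 : ↥(VplusAt K M l r b t s.1)) : M.obj s.1) ∈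
        VplusAt K M l r b t u.1 := by
      rw [Submodule.coe_zero, map_zero]
      exact (VplusAt K M l r b t u.1).zero_mem
    refine ⟨0, by simp, hmem, ?_⟩
    have heq : (⟨rho K M h ((0 : ↥(VplusAt K M l r b t s.1)) : M.obj s.1), hmem⟩ :
        ↥(VplusAt K M l r b t u.1)) = 0 := by
      ext
      show rho K M h ((0 : ↥(VplusAt K M l r b t s.1)) : M.obj s.1) = (0 : M.obj u.1)
      rw [Submodule.coe_zero, map_zero]
    rw [heq]
    simp
  add_mem' := by
    intro q1 q2 hq1 hq2 s u h
    obtain ⟨w1, hw1, hmem1, hval1⟩ := hq1 s u h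
    obtain ⟨w2, hw2, hmem2, hval2⟩ := hq2 s u h
    have hmem : rho K M h ((w1 + w2 : ↥(VplusAt K M l r b t s.1)) : M.obj s.1) ∈
        VplusAt K M l r b t u.1 := by
      rw [Submodule.coe_add, map_add]
      exact (VplusAt K M l r b t u.1).add_mem hmem1 hmem2
    refine ⟨w1 + w2, ?_, hmem, ?_⟩
    · rw [Submodule.Quotient.mk_add, hw1, hw2]
      rfl
    · have heq : (⟨rho K M h ((w1 + w2 : ↥(VplusAt K M l r b t s.1)) : M.obj s.1), hmem⟩ :
          ↥(VplusAt K M l r b t u.1)) =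
          (⟨rho K M h w1.1, hmem1⟩ : ↥(VplusAt K M l r b t u.1)) +
          (⟨rho K M h w2.1, hmem2⟩ : ↥(VplusAt K M l r b t u.1)) := by
        ext
        show rho K M h ((w1 + w2 : ↥(VplusAt K M l r b t s.1)) : M.obj s.1) =
          rho K M h (w1 : M.obj s.1) + rho K M h (w2 : M.obj s.1)
        rw [Submodule.coe_add, map_add]
      rw [heq, Submodule.Quotient.mk_add, hval1, hval2]
      rfl
  smul_mem' := by
    intro c q hq s u h
    obtain ⟨w, hw, hmem, hval⟩ := hq s u h
    have hmem' : rho K M h ((c • w : ↥(VplusAt K M l r b t s.1)) : M.obj s.1) ∈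
        VplusAt K M l r b t u.1 := by
      rw [Submodule.coe_smul, map_smul]
      exact (VplusAt K M l r b t u.1).smul_mem c hmem
    refine ⟨c • w, ?_, hmem', ?_⟩
    · rw [Submodule.Quotient.mk_smul, hw]
      rfl
    · have heq : (⟨rho K M h ((c • w : ↥(VplusAt K M l r b t s.1)) : M.obj s.1), hmem'⟩ :
          ↥(VplusAt K M l r b t u.1)) =
          c • (⟨rho K M h w.1, hmem⟩ : ↥(VplusAt K M l r b t u.1)) := by
        ext
        show rho K M h ((c • w : ↥(VplusAt K M l r b t s.1)) : M.obj s.1) =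
          c • rho K M h (w : M.obj s.1)
        rw [Submodule.coe_smul, map_smul]
      rw [heq, Submodule.Quotient.mk_smul, hval]
      rfl

/-- The data of a rectangle filtrate of `M` for the rectangle determined by four cuts:
a choice of complement `W` of `L⁻` in `L⁺` computed inside the submodule `N = V⁺_R(M)`,
chosen inside `lim_{u∈R} (Ker⁺_{r,u}(N) ∩ Ker⁺_{t,u}(N))`. -/
structure RectangleFiltrate (M : PersistenceModule K (X × Y))
    (l r : Cut X) (b t : Cut Y) where
  W : Submodule K (∀ v : ↥(rectOf l r b t), (VplusMod K M l r b t).obj v.1)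
  le_lim : W ≤ limVplus K (VplusMod K M l r b t) l r b t
  le_ker : W ≤ Submodule.pi Set.univ (fun v : ↥(rectOf l r b t) =>
    KerPlusH K (VplusMod K M l r b t) r v.1 ⊓ KerPlusV K (VplusMod K M l r b t) t v.1)
  inf_eq : W ⊓ limVminus K (VplusMod K M l r b t) l r b t = ⊥
  sup_eq : W ⊔ limVminus K (VplusMod K M l r b t) l r b t =
    limVplus K (VplusMod K M l r b t) l r b t

/-- The subspace of `M` at index `u` determined by a rectangle filtrate (`π_u(W)` for
`u ∈ R` and `0` elsewhere, viewed inside `M` via the inclusion `V⁺_R(M) ⊆ M`). -/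
noncomputable def RectangleFiltrate.atPoint {M : PersistenceModule K (X × Y)}
    {l r : Cut X} {b t : Cut Y} (F : RectangleFiltrate K M l r b t) (u : X × Y) :
    Submodule K (M.obj u) :=
  Submodule.map (VplusSub K M l r b t u).subtype
    (filtrateFam K (VplusMod K M l r b t) (rectOf l r b t) F.W u)

/-! ### Auxiliary lemmas for Statement 11 -/

section Aux11

variable (K : Type) [Field K]

theorem rho_rfl {P : Type} [Preorder P] (M : PersistenceModule K P) {p : P} (h : p ≤ p) :
    rho K M h = LinearMap.id := by
  have : homOfLE h = 𝟙 p := rfl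
  rw [rho, this, M.map_id]
  rfl

theorem rho_rho {P : Type} [Preorder P] (M : PersistenceModule K P) {p q u : P}
    (h1 : p ≤ q) (h2 : q ≤ u) (x : M.obj p) :
    rho K M h2 (rho K M h1 x) = rho K M (h1.trans h2) x := by
  rw [← rho_comp K M h1 h2]
  rfl

theorem range_rho_le {P : Type} [Preorder P] (M : PersistenceModule K P) {p q u : P}
    (h1 : p ≤ q) (h2 : q ≤ u) :
    LinearMap.range (rho K M (h1.trans h2)) ≤ LinearMap.range (rho K M h2) := by
  rintro _ ⟨x, rfl⟩
  exact ⟨rho K M h1 x, rho_rho K M h1 h2 x⟩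

theorem ker_rho_le {P : Type} [Preorder P] (M : PersistenceModule K P) {u p q : P}
    (h1 : u ≤ p) (h2 : p ≤ q) :
    LinearMap.ker (rho K M h1) ≤ LinearMap.ker (rho K M (h1.trans h2)) := by
  intro x hx
  have : rho K M h2 (rho K M h1 x) = 0 := by
    rw [LinearMap.mem_ker.1 hx, map_zero]
  rwa [rho_rho K M h1 h2 x] at this

theorem min_mem_of {Z : Type} [LinearOrder Z] {S : Set Z} {a c : Z} (ha : a ∈ S) (hc : c ∈ S) :
    min a c ∈ S := by
  rcases min_choice a c with h | h <;> rw [h] <;> assumption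

theorem max_mem_of {Z : Type} [LinearOrder Z] {S : Set Z} {a c : Z} (ha : a ∈ S) (hc : c ∈ S) :
    max a c ∈ S := by
  rcases max_choice a c with h | h <;> rw [h] <;> assumption

variable {X Y : Type} [LinearOrder X] [LinearOrder Y]

theorem mem_rectOf {l r : Cut X} {b t : Cut Y} {u : X × Y} :
    u ∈ rectOf l r b t ↔ (u.1 ∈ l.upper ∧ u.1 ∈ r.lower) ∧ u.2 ∈ b.upper ∧ u.2 ∈ t.lower :=
  Iff.rfl

theorem rect_min_mem {l r : Cut X} {b t : Cut Y} {u v : X × Y}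
    (hu : u ∈ rectOf l r b t) (hv : v ∈ rectOf l r b t) :
    ((min u.1 v.1, min u.2 v.2) : X × Y) ∈ rectOf l r b t :=
  ⟨⟨min_mem_of hu.1.1 hv.1.1, min_mem_of hu.1.2 hv.1.2⟩,
    min_mem_of hu.2.1 hv.2.1, min_mem_of hu.2.2 hv.2.2⟩

theorem rect_max_mem {l r : Cut X} {b t : Cut Y} {u v : X × Y}
    (hu : u ∈ rectOf l r b t) (hv : v ∈ rectOf l r b t) :
    ((max u.1 v.1, max u.2 v.2) : X × Y) ∈ rectOf l r b t :=
  ⟨⟨max_mem_of hu.1.1 hv.1.1, max_mem_of hu.1.2 hv.1.2⟩,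
    max_mem_of hu.2.1 hv.2.1, max_mem_of hu.2.2 hv.2.2⟩

variable (M : PersistenceModule K (X × Y))

theorem mem_ImPlusH {l : Cut X} {u : X × Y} {v : M.obj u} :
    v ∈ ImPlusH K M l u ↔ ∀ (x : X) (h : x ∈ l.upper ∧ x ≤ u.1),
      v ∈ LinearMap.range (rho K M (show ((x, u.2) : X × Y) ≤ u from ⟨h.2, le_rfl⟩)) := by
  simp only [ImPlusH, Submodule.mem_iInf]

theorem mem_ImPlusV {b : Cut Y} {u : X × Y} {v : M.obj u} :
    v ∈ ImPlusV K M b u ↔ ∀ (y : Y) (h : y ∈ b.upper ∧ y ≤ u.2),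
      v ∈ LinearMap.range (rho K M (show ((u.1, y) : X × Y) ≤ u from ⟨le_rfl, h.2⟩)) := by
  simp only [ImPlusV, Submodule.mem_iInf]

theorem mem_KerPlusH {r : Cut X} {u : X × Y} {v : M.obj u} :
    v ∈ KerPlusH K M r u ↔ ∀ (x : X) (h : x ∈ r.upper ∧ u.1 ≤ x),
      rho K M (show u ≤ ((x, u.2) : X × Y) from ⟨h.2, le_rfl⟩) v = 0 := by
  simp only [KerPlusH, Submodule.mem_iInf, LinearMap.mem_ker]

theorem mem_KerPlusV {t : Cut Y} {u : X × Y} {v : M.obj u} :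
    v ∈ KerPlusV K M t u ↔ ∀ (y : Y) (h : y ∈ t.upper ∧ u.2 ≤ y),
      rho K M (show u ≤ ((u.1, y) : X × Y) from ⟨le_rfl, h.2⟩) v = 0 := by
  simp only [KerPlusV, Submodule.mem_iInf, LinearMap.mem_ker]

theorem ker_le_KerMinusH {r : Cut X} {u : X × Y} {x : X} (h : x ∈ r.lower ∧ u.1 ≤ x) :
    LinearMap.ker (rho K M (show u ≤ ((x, u.2) : X × Y) from ⟨h.2, le_rfl⟩)) ≤
      KerMinusH K M r u :=
  le_iSup₂ (f := fun (x : X) (h : x ∈ r.lower ∧ u.1 ≤ x) =>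
    LinearMap.ker (rho K M (show u ≤ ((x, u.2) : X × Y) from ⟨h.2, le_rfl⟩))) x h

theorem ker_le_KerMinusV {t : Cut Y} {u : X × Y} {y : Y} (h : y ∈ t.lower ∧ u.2 ≤ y) :
    LinearMap.ker (rho K M (show u ≤ ((u.1, y) : X × Y) from ⟨le_rfl, h.2⟩)) ≤
      KerMinusV K M t u :=
  le_iSup₂ (f := fun (y : Y) (h : y ∈ t.lower ∧ u.2 ≤ y) =>
    LinearMap.ker (rho K M (show u ≤ ((u.1, y) : X × Y) from ⟨le_rfl, h.2⟩))) y h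

theorem exists_of_mem_KerMinusH {r : Cut X} {u : X × Y} (hu : u.1 ∈ r.lower) {v : M.obj u}
    (hv : v ∈ KerMinusH K M r u) :
    ∃ (x : X) (h : x ∈ r.lower ∧ u.1 ≤ x),
      rho K M (show u ≤ ((x, u.2) : X × Y) from ⟨h.2, le_rfl⟩) v = 0 := by
  have hre : KerMinusH K M r u = ⨆ p : {x : X // x ∈ r.lower ∧ u.1 ≤ x},
      LinearMap.ker (rho K M (show u ≤ ((p.1, u.2) : X × Y) from ⟨p.2.2, le_rfl⟩)) := by
    rw [KerMinusH, iSup_subtype']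
  rw [hre] at hv
  haveI : Nonempty {x : X // x ∈ r.lower ∧ u.1 ≤ x} := ⟨⟨u.1, hu, le_rfl⟩⟩
  have hdir : Directed (· ≤ ·) (fun p : {x : X // x ∈ r.lower ∧ u.1 ≤ x} =>
      LinearMap.ker (rho K M (show u ≤ ((p.1, u.2) : X × Y) from ⟨p.2.2, le_rfl⟩))) := by
    intro p q
    refine ⟨⟨max p.1 q.1, max_mem_of p.2.1 q.2.1, le_trans p.2.2 (le_max_left _ _)⟩, ?_, ?_⟩
    · exact ker_rho_le K M (show u ≤ ((p.1, u.2) : X × Y) from ⟨p.2.2, le_rfl⟩)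
        (show ((p.1, u.2) : X × Y) ≤ ((max p.1 q.1, u.2) : X × Y) from
          ⟨le_max_left _ _, le_rfl⟩)
    · exact ker_rho_le K M (show u ≤ ((q.1, u.2) : X × Y) from ⟨q.2.2, le_rfl⟩)
        (show ((q.1, u.2) : X × Y) ≤ ((max p.1 q.1, u.2) : X × Y) from
          ⟨le_max_right _ _, le_rfl⟩)
  obtain ⟨p, hp⟩ := (Submodule.mem_iSup_of_directed _ hdir).1 hv
  exact ⟨p.1, p.2, hp⟩

theorem exists_of_mem_KerMinusV {t : Cut Y} {u : X × Y} (hu : u.2 ∈ t.lower) {v : M.obj u}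
    (hv : v ∈ KerMinusV K M t u) :
    ∃ (y : Y) (h : y ∈ t.lower ∧ u.2 ≤ y),
      rho K M (show u ≤ ((u.1, y) : X × Y) from ⟨le_rfl, h.2⟩) v = 0 := by
  have hre : KerMinusV K M t u = ⨆ p : {y : Y // y ∈ t.lower ∧ u.2 ≤ y},
      LinearMap.ker (rho K M (show u ≤ ((u.1, p.1) : X × Y) from ⟨le_rfl, p.2.2⟩)) := by
    rw [KerMinusV, iSup_subtype']
  rw [hre] at hv
  haveI : Nonempty {y : Y // y ∈ t.lower ∧ u.2 ≤ y} := ⟨⟨u.2, hu, le_rfl⟩⟩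
  have hdir : Directed (· ≤ ·) (fun p : {y : Y // y ∈ t.lower ∧ u.2 ≤ y} =>
      LinearMap.ker (rho K M (show u ≤ ((u.1, p.1) : X × Y) from ⟨le_rfl, p.2.2⟩))) := by
    intro p q
    refine ⟨⟨max p.1 q.1, max_mem_of p.2.1 q.2.1, le_trans p.2.2 (le_max_left _ _)⟩, ?_, ?_⟩
    · exact ker_rho_le K M (show u ≤ ((u.1, p.1) : X × Y) from ⟨le_rfl, p.2.2⟩)
        (show ((u.1, p.1) : X × Y) ≤ ((u.1, max p.1 q.1) : X × Y) from
          ⟨le_rfl, le_max_left _ _⟩)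
    · exact ker_rho_le K M (show u ≤ ((u.1, q.1) : X × Y) from ⟨le_rfl, q.2.2⟩)
        (show ((u.1, q.1) : X × Y) ≤ ((u.1, max p.1 q.1) : X × Y) from
          ⟨le_rfl, le_max_right _ _⟩)
  obtain ⟨p, hp⟩ := (Submodule.mem_iSup_of_directed _ hdir).1 hv
  exact ⟨p.1, p.2, hp⟩

theorem KerMinusH_le_KerPlusH {r : Cut X} {u : X × Y} :
    KerMinusH K M r u ≤ KerPlusH K M r u := by
  refine iSup₂_le fun x hx => ?_
  intro v hv
  rw [mem_KerPlusH]
  intro x' hx'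
  have hlt : x < x' := r.lt x hx.1 x' hx'.1
  have := ker_rho_le K M (show u ≤ ((x, u.2) : X × Y) from ⟨hx.2, le_rfl⟩)
    (show ((x, u.2) : X × Y) ≤ (x', u.2) from ⟨hlt.le, le_rfl⟩) hv
  exact LinearMap.mem_ker.1 this

theorem KerMinusV_le_KerPlusV {t : Cut Y} {u : X × Y} :
    KerMinusV K M t u ≤ KerPlusV K M t u := by
  refine iSup₂_le fun y hy => ?_
  intro v hv
  rw [mem_KerPlusV]
  intro y' hy'
  have hlt : y < y' := t.lt y hy.1 y' hy'.1
  have := ker_rho_le K M (show u ≤ ((u.1, y) : X × Y) from ⟨le_rfl, hy.2⟩)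
    (show ((u.1, y) : X × Y) ≤ (u.1, y') from ⟨le_rfl, hlt.le⟩) hv
  exact LinearMap.mem_ker.1 this

end Aux11


section Aux11b

variable (K : Type) [Field K] {X Y : Type} [LinearOrder X] [LinearOrder Y]
variable (M : PersistenceModule K (X × Y))

theorem rho_mem_KerPlusH (r : Cut X) {s u : X × Y} (h : s ≤ u) {v : M.obj s}
    (hv : v ∈ KerPlusH K M r s) : rho K M h v ∈ KerPlusH K M r u := by
  rw [mem_KerPlusH]
  intro x hx
  have h0 := (mem_KerPlusH K M).1 hv x ⟨hx.1, h.1.trans hx.2⟩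
  calc rho K M (show u ≤ ((x, u.2) : X × Y) from ⟨hx.2, le_rfl⟩) (rho K M h v)
      = rho K M (h.trans (show u ≤ ((x, u.2) : X × Y) from ⟨hx.2, le_rfl⟩)) v :=
        rho_rho K M _ _ v
    _ = rho K M (show ((x, s.2) : X × Y) ≤ (x, u.2) from ⟨le_rfl, h.2⟩)
        (rho K M (show s ≤ ((x, s.2) : X × Y) from ⟨h.1.trans hx.2, le_rfl⟩) v) :=
        (rho_rho K M _ _ v).symm
    _ = 0 := by rw [h0, map_zero]

theorem rho_mem_KerPlusV (t : Cut Y) {s u : X × Y} (h : s ≤ u) {v : M.obj s}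
    (hv : v ∈ KerPlusV K M t s) : rho K M h v ∈ KerPlusV K M t u := by
  rw [mem_KerPlusV]
  intro y hy
  have h0 := (mem_KerPlusV K M).1 hv y ⟨hy.1, h.2.trans hy.2⟩
  calc rho K M (show u ≤ ((u.1, y) : X × Y) from ⟨le_rfl, hy.2⟩) (rho K M h v)
      = rho K M (h.trans (show u ≤ ((u.1, y) : X × Y) from ⟨le_rfl, hy.2⟩)) v :=
        rho_rho K M _ _ v
    _ = rho K M (show ((s.1, y) : X × Y) ≤ (u.1, y) from ⟨h.1, le_rfl⟩)
        (rho K M (show s ≤ ((s.1, y) : X × Y) from ⟨le_rfl, h.2.trans hy.2⟩) v) :=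
        (rho_rho K M _ _ v).symm
    _ = 0 := by rw [h0, map_zero]

theorem rho_mem_KerMinusH (r : Cut X) {s u : X × Y} (h : s ≤ u)
    (hs : s.1 ∈ r.lower) (hu : u.1 ∈ r.lower) {v : M.obj s}
    (hv : v ∈ KerMinusH K M r s) : rho K M h v ∈ KerMinusH K M r u := by
  obtain ⟨x, hx, hx0⟩ := exists_of_mem_KerMinusH K M hs hv
  refine ker_le_KerMinusH K M
    (show max x u.1 ∈ r.lower ∧ u.1 ≤ max x u.1 from
      ⟨max_mem_of hx.1 hu, le_max_right _ _⟩) (LinearMap.mem_ker.2 ?_)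
  calc rho K M (show u ≤ ((max x u.1, u.2) : X × Y) from ⟨le_max_right _ _, le_rfl⟩)
        (rho K M h v)
      = rho K M (h.trans (show u ≤ ((max x u.1, u.2) : X × Y) from
          ⟨le_max_right _ _, le_rfl⟩)) v := rho_rho K M _ _ v
    _ = rho K M (show ((x, s.2) : X × Y) ≤ (max x u.1, u.2) from ⟨le_max_left _ _, h.2⟩)
        (rho K M (show s ≤ ((x, s.2) : X × Y) from ⟨hx.2, le_rfl⟩) v) :=
        (rho_rho K M _ _ v).symm
    _ = 0 := by rw [hx0, map_zero]

theorem rho_mem_KerMinusV (t : Cut Y) {s u : X × Y} (h : s ≤ u)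
    (hs : s.2 ∈ t.lower) (hu : u.2 ∈ t.lower) {v : M.obj s}
    (hv : v ∈ KerMinusV K M t s) : rho K M h v ∈ KerMinusV K M t u := by
  obtain ⟨y, hy, hy0⟩ := exists_of_mem_KerMinusV K M hs hv
  refine ker_le_KerMinusV K M
    (show max y u.2 ∈ t.lower ∧ u.2 ≤ max y u.2 from
      ⟨max_mem_of hy.1 hu, le_max_right _ _⟩) (LinearMap.mem_ker.2 ?_)
  calc rho K M (show u ≤ ((u.1, max y u.2) : X × Y) from ⟨le_rfl, le_max_right _ _⟩)
        (rho K M h v)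
      = rho K M (h.trans (show u ≤ ((u.1, max y u.2) : X × Y) from
          ⟨le_rfl, le_max_right _ _⟩)) v := rho_rho K M _ _ v
    _ = rho K M (show ((s.1, y) : X × Y) ≤ (u.1, max y u.2) from ⟨h.1, le_max_left _ _⟩)
        (rho K M (show s ≤ ((s.1, y) : X × Y) from ⟨le_rfl, hy.2⟩) v) :=
        (rho_rho K M _ _ v).symm
    _ = 0 := by rw [hy0, map_zero]

theorem rho_mem_ImPlusH (l : Cut X) (hwe : WeaklyExact K M) {s u : X × Y} (h : s ≤ u)
    {v : M.obj s} (hv : v ∈ ImPlusH K M l s) : rho K M h v ∈ ImPlusH K M l u := by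
  rw [mem_ImPlusH]
  intro x hx
  by_cases hxs : x ≤ s.1
  · obtain ⟨m, hm⟩ := (mem_ImPlusH K M).1 hv x ⟨hx.1, hxs⟩
    refine ⟨rho K M (show ((x, s.2) : X × Y) ≤ (x, u.2) from ⟨le_rfl, h.2⟩) m, ?_⟩
    calc rho K M (show ((x, u.2) : X × Y) ≤ u from ⟨hx.2, le_rfl⟩)
          (rho K M (show ((x, s.2) : X × Y) ≤ (x, u.2) from ⟨le_rfl, h.2⟩) m)
        = rho K M ((show ((x, s.2) : X × Y) ≤ (x, u.2) from ⟨le_rfl, h.2⟩).trans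
            (show ((x, u.2) : X × Y) ≤ u from ⟨hx.2, le_rfl⟩)) m := rho_rho K M _ _ m
      _ = rho K M h (rho K M (show ((x, s.2) : X × Y) ≤ s from ⟨hxs, le_rfl⟩) m) :=
          (rho_rho K M _ _ m).symm
      _ = rho K M h v := by rw [hm]
  · have hsx : s.1 ≤ x := le_of_not_ge hxs
    have hmem : rho K M h v ∈
        LinearMap.range (rho K M (show ((x, s.2) : X × Y) ≤ u from ⟨hx.2, h.2⟩)) := by
      refine ⟨rho K M (show s ≤ ((x, s.2) : X × Y) from ⟨hsx, le_rfl⟩) v, ?_⟩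
      exact rho_rho K M _ _ v
    rw [(hwe (x, s.2) u ⟨hx.2, h.2⟩).1] at hmem
    exact (Submodule.mem_inf.1 hmem).2

theorem rho_mem_ImPlusV (b : Cut Y) (hwe : WeaklyExact K M) {s u : X × Y} (h : s ≤ u)
    {v : M.obj s} (hv : v ∈ ImPlusV K M b s) : rho K M h v ∈ ImPlusV K M b u := by
  rw [mem_ImPlusV]
  intro y hy
  by_cases hys : y ≤ s.2
  · obtain ⟨m, hm⟩ := (mem_ImPlusV K M).1 hv y ⟨hy.1, hys⟩
    refine ⟨rho K M (show ((s.1, y) : X × Y) ≤ (u.1, y) from ⟨h.1, le_rfl⟩) m, ?_⟩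
    calc rho K M (show ((u.1, y) : X × Y) ≤ u from ⟨le_rfl, hy.2⟩)
          (rho K M (show ((s.1, y) : X × Y) ≤ (u.1, y) from ⟨h.1, le_rfl⟩) m)
        = rho K M ((show ((s.1, y) : X × Y) ≤ (u.1, y) from ⟨h.1, le_rfl⟩).trans
            (show ((u.1, y) : X × Y) ≤ u from ⟨le_rfl, hy.2⟩)) m := rho_rho K M _ _ m
      _ = rho K M h (rho K M (show ((s.1, y) : X × Y) ≤ s from ⟨le_rfl, hys⟩) m) :=
          (rho_rho K M _ _ m).symm
      _ = rho K M h v := by rw [hm]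
  · have hsy : s.2 ≤ y := le_of_not_ge hys
    have hmem : rho K M h v ∈
        LinearMap.range (rho K M (show ((s.1, y) : X × Y) ≤ u from ⟨h.1, hy.2⟩)) := by
      refine ⟨rho K M (show s ≤ ((s.1, y) : X × Y) from ⟨le_rfl, hsy⟩) v, ?_⟩
      exact rho_rho K M _ _ v
    rw [(hwe (s.1, y) u ⟨h.1, hy.2⟩).1] at hmem
    exact (Submodule.mem_inf.1 hmem).1

theorem map_ImMinusH_le (l : Cut X) {s u : X × Y} (h : s ≤ u) :
    Submodule.map (rho K M h) (ImMinusH K M l s) ≤ ImMinusH K M l u := by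
  rw [ImMinusH, Submodule.map_iSup]
  refine iSup_le fun x => ?_
  rw [Submodule.map_iSup]
  refine iSup_le fun hx => ?_
  calc Submodule.map (rho K M h)
        (LinearMap.range (rho K M (show ((x, s.2) : X × Y) ≤ s from ⟨hx.2, le_rfl⟩)))
      = LinearMap.range ((rho K M h).comp
          (rho K M (show ((x, s.2) : X × Y) ≤ s from ⟨hx.2, le_rfl⟩))) :=
        (LinearMap.range_comp _ _).symm
    _ = LinearMap.range (rho K M ((show ((x, s.2) : X × Y) ≤ s from
          ⟨hx.2, le_rfl⟩).trans h)) := by rw [rho_comp]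
    _ ≤ LinearMap.range (rho K M (show ((x, u.2) : X × Y) ≤ u from
          ⟨hx.2.trans h.1, le_rfl⟩)) :=
        range_rho_le K M (show ((x, s.2) : X × Y) ≤ (x, u.2) from ⟨le_rfl, h.2⟩) _
    _ ≤ ImMinusH K M l u := le_iSup₂ (f := fun (x : X) (h' : x ∈ l.lower ∧ x ≤ u.1) =>
          LinearMap.range (rho K M (show ((x, u.2) : X × Y) ≤ u from ⟨h'.2, le_rfl⟩)))
          x ⟨hx.1, hx.2.trans h.1⟩

theorem map_ImMinusV_le (b : Cut Y) {s u : X × Y} (h : s ≤ u) :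
    Submodule.map (rho K M h) (ImMinusV K M b s) ≤ ImMinusV K M b u := by
  rw [ImMinusV, Submodule.map_iSup]
  refine iSup_le fun y => ?_
  rw [Submodule.map_iSup]
  refine iSup_le fun hy => ?_
  calc Submodule.map (rho K M h)
        (LinearMap.range (rho K M (show ((s.1, y) : X × Y) ≤ s from ⟨le_rfl, hy.2⟩)))
      = LinearMap.range ((rho K M h).comp
          (rho K M (show ((s.1, y) : X × Y) ≤ s from ⟨le_rfl, hy.2⟩))) :=
        (LinearMap.range_comp _ _).symm
    _ = LinearMap.range (rho K M ((show ((s.1, y) : X × Y) ≤ s from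
          ⟨le_rfl, hy.2⟩).trans h)) := by rw [rho_comp]
    _ ≤ LinearMap.range (rho K M (show ((u.1, y) : X × Y) ≤ u from
          ⟨le_rfl, hy.2.trans h.2⟩)) :=
        range_rho_le K M (show ((s.1, y) : X × Y) ≤ (u.1, y) from ⟨h.1, le_rfl⟩) _
    _ ≤ ImMinusV K M b u := le_iSup₂ (f := fun (y : Y) (h' : y ∈ b.lower ∧ y ≤ u.2) =>
          LinearMap.range (rho K M (show ((u.1, y) : X × Y) ≤ u from ⟨le_rfl, h'.2⟩)))
          y ⟨hy.1, hy.2.trans h.2⟩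

theorem rho_mem_ImPlusR (l : Cut X) (b : Cut Y) (hwe : WeaklyExact K M) {s u : X × Y}
    (h : s ≤ u) {v : M.obj s} (hv : v ∈ ImPlusR K M l b s) :
    rho K M h v ∈ ImPlusR K M l b u :=
  Submodule.mem_inf.2 ⟨rho_mem_ImPlusH K M l hwe h (Submodule.mem_inf.1 hv).1,
    rho_mem_ImPlusV K M b hwe h (Submodule.mem_inf.1 hv).2⟩

theorem rho_mem_KerPlusR (r : Cut X) (t : Cut Y) {s u : X × Y} (h : s ≤ u)
    (hs2 : s.2 ∈ t.lower) (hu2 : u.2 ∈ t.lower) (hs1 : s.1 ∈ r.lower) (hu1 : u.1 ∈ r.lower)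
    {v : M.obj s} (hv : v ∈ KerPlusR K M r t s) : rho K M h v ∈ KerPlusR K M r t u := by
  obtain ⟨hv1, hv2⟩ := Submodule.mem_inf.1 hv
  obtain ⟨a, ha, c, hc, hac⟩ := Submodule.mem_sup.1 hv1
  obtain ⟨a', ha', c', hc', hac'⟩ := Submodule.mem_sup.1 hv2
  refine Submodule.mem_inf.2 ⟨?_, ?_⟩
  · rw [← hac, map_add]
    exact add_mem (Submodule.mem_sup_left (rho_mem_KerPlusH K M r h ha))
      (Submodule.mem_sup_right (rho_mem_KerMinusV K M t h hs2 hu2 hc))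
  · rw [← hac', map_add]
    exact add_mem (Submodule.mem_sup_left (rho_mem_KerMinusH K M r h hs1 hu1 ha'))
      (Submodule.mem_sup_right (rho_mem_KerPlusV K M t h hc'))

theorem rho_mem_KerMinusR (r : Cut X) (t : Cut Y) {s u : X × Y} (h : s ≤ u)
    (hs2 : s.2 ∈ t.lower) (hu2 : u.2 ∈ t.lower) (hs1 : s.1 ∈ r.lower) (hu1 : u.1 ∈ r.lower)
    {v : M.obj s} (hv : v ∈ KerMinusR K M r t s) : rho K M h v ∈ KerMinusR K M r t u := by
  obtain ⟨a, ha, c, hc, hac⟩ := Submodule.mem_sup.1 hv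
  rw [← hac, map_add]
  exact add_mem (Submodule.mem_sup_left (rho_mem_KerMinusH K M r h hs1 hu1 ha))
    (Submodule.mem_sup_right (rho_mem_KerMinusV K M t h hs2 hu2 hc))

theorem rho_mem_ImMinusR (l : Cut X) (b : Cut Y) (hwe : WeaklyExact K M) {s u : X × Y}
    (h : s ≤ u) {v : M.obj s} (hv : v ∈ ImMinusR K M l b s) :
    rho K M h v ∈ ImMinusR K M l b u := by
  obtain ⟨hv1, hv2⟩ := Submodule.mem_inf.1 hv
  obtain ⟨a, ha, c, hc, hac⟩ := Submodule.mem_sup.1 hv1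
  refine Submodule.mem_inf.2 ⟨?_, rho_mem_ImPlusR K M l b hwe h hv2⟩
  rw [← hac, map_add]
  exact add_mem (Submodule.mem_sup_left (map_ImMinusH_le K M l h ⟨a, ha, rfl⟩))
    (Submodule.mem_sup_right (map_ImMinusV_le K M b h ⟨c, hc, rfl⟩))

theorem rho_mem_VplusAt (l r : Cut X) (b t : Cut Y) (hwe : WeaklyExact K M) {s u : X × Y}
    (hss : s ∈ rectOf l r b t) (huu : u ∈ rectOf l r b t) (h : s ≤ u) {v : M.obj s}
    (hv : v ∈ VplusAt K M l r b t s) : rho K M h v ∈ VplusAt K M l r b t u := by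
  obtain ⟨hv1, hv2⟩ := Submodule.mem_inf.1 hv
  exact Submodule.mem_inf.2 ⟨rho_mem_ImPlusR K M l b hwe h hv1,
    rho_mem_KerPlusR K M r t h hss.2.2 huu.2.2 hss.1.2 huu.1.2 hv2⟩

theorem rho_mem_VminusAt (l r : Cut X) (b t : Cut Y) (hwe : WeaklyExact K M) {s u : X × Y}
    (hss : s ∈ rectOf l r b t) (huu : u ∈ rectOf l r b t) (h : s ≤ u) {v : M.obj s}
    (hv : v ∈ VminusAt K M l r b t s) : rho K M h v ∈ VminusAt K M l r b t u := by
  obtain ⟨a, ha, c, hc, hac⟩ := Submodule.mem_sup.1 hv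
  rw [← hac, map_add]
  refine add_mem (Submodule.mem_sup_left ?_) (Submodule.mem_sup_right ?_)
  · obtain ⟨ha1, ha2⟩ := Submodule.mem_inf.1 ha
    exact Submodule.mem_inf.2 ⟨rho_mem_ImPlusR K M l b hwe h ha1,
      rho_mem_KerMinusR K M r t h hss.2.2 huu.2.2 hss.1.2 huu.1.2 ha2⟩
  · obtain ⟨hc1, hc2⟩ := Submodule.mem_inf.1 hc
    exact Submodule.mem_inf.2 ⟨rho_mem_ImMinusR K M l b hwe h hc1,
      rho_mem_KerPlusR K M r t h hss.2.2 huu.2.2 hss.1.2 huu.1.2 hc2⟩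

theorem VplusAt_decomp (l r : Cut X) (b t : Cut Y) (hwe : WeaklyExact K M) {u : X × Y}
    (hu : u ∈ rectOf l r b t)
    (hcond : KerPlusH K M r u ⊓ KerPlusV K M t u ≤ ImPlusR K M l b u)
    {v : M.obj u} (hv : v ∈ VplusAt K M l r b t u) :
    ∃ k : M.obj u, (k ∈ VplusAt K M l r b t u ∧ k ∈ KerPlusH K M r u ∧
      k ∈ KerPlusV K M t u) ∧ v - k ∈ VminusAt K M l r b t u := by
  obtain ⟨hvim, hvker⟩ := Submodule.mem_inf.1 hv
  obtain ⟨hk1, hk2⟩ := Submodule.mem_inf.1 hvker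
  obtain ⟨a, ha, bb, hbb, hab⟩ := Submodule.mem_sup.1 hk1
  obtain ⟨c, hc, e, he, hce⟩ := Submodule.mem_sup.1 hk2
  obtain ⟨x₀, hx₀, hcx⟩ := exists_of_mem_KerMinusH K M hu.1.2 hc
  obtain ⟨y₀, hy₀, hby⟩ := exists_of_mem_KerMinusV K M hu.2.2 hbb
  have hup : u ≤ ((x₀, y₀) : X × Y) := ⟨hx₀.2, hy₀.2⟩
  have hae : a - e ∈ LinearMap.ker (rho K M hup) := by
    rw [LinearMap.mem_ker]
    have hcb : a - e = c - bb := by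
      rw [sub_eq_sub_iff_add_eq_add, hab, hce]
    rw [hcb, map_sub]
    have hc0 : rho K M hup c = 0 := by
      calc rho K M hup c
          = rho K M (show ((x₀, u.2) : X × Y) ≤ (x₀, y₀) from ⟨le_rfl, hy₀.2⟩)
            (rho K M (show u ≤ ((x₀, u.2) : X × Y) from ⟨hx₀.2, le_rfl⟩) c) :=
            (rho_rho K M _ _ c).symm
        _ = 0 := by rw [hcx, map_zero]
    have hb0 : rho K M hup bb = 0 := by
      calc rho K M hup bb
          = rho K M (show ((u.1, y₀) : X × Y) ≤ (x₀, y₀) from ⟨hx₀.2, le_rfl⟩)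
            (rho K M (show u ≤ ((u.1, y₀) : X × Y) from ⟨le_rfl, hy₀.2⟩) bb) :=
            (rho_rho K M _ _ bb).symm
        _ = 0 := by rw [hby, map_zero]
    rw [hc0, hb0, sub_zero]
  rw [(hwe u (x₀, y₀) hup).2] at hae
  obtain ⟨c', hc', b', hb', hcb'⟩ := Submodule.mem_sup.1 hae
  have hc'H : c' ∈ KerPlusH K M r u :=
    KerMinusH_le_KerPlusH K M (ker_le_KerMinusH K M ⟨hx₀.1, hx₀.2⟩ hc')
  have hb'V : b' ∈ KerPlusV K M t u :=
    KerMinusV_le_KerPlusV K M (ker_le_KerMinusV K M ⟨hy₀.1, hy₀.2⟩ hb')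
  have hkH : a - c' ∈ KerPlusH K M r u := sub_mem ha hc'H
  have hk2' : a - c' = e + b' := by
    have ha' : a = c' + b' + e := by rw [hcb', sub_add_cancel]
    rw [ha']
    abel
  have hkV : a - c' ∈ KerPlusV K M t u := by
    rw [hk2']
    exact add_mem he hb'V
  have hkIm : a - c' ∈ ImPlusR K M l b u := hcond (Submodule.mem_inf.2 ⟨hkH, hkV⟩)
  refine ⟨a - c', ⟨Submodule.mem_inf.2 ⟨hkIm, Submodule.mem_inf.2
    ⟨Submodule.mem_sup_left hkH, Submodule.mem_sup_right hkV⟩⟩, hkH, hkV⟩, ?_⟩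
  have hvk : v - (a - c') = bb + c' := by
    rw [← hab]
    abel
  refine Submodule.mem_sup_left (Submodule.mem_inf.2 ⟨sub_mem hvim hkIm, ?_⟩)
  rw [hvk]
  exact add_mem
    (Submodule.mem_sup_right (ker_le_KerMinusV K M ⟨hy₀.1, hy₀.2⟩
      (LinearMap.mem_ker.2 hby)))
    (Submodule.mem_sup_left (ker_le_KerMinusH K M ⟨hx₀.1, hx₀.2⟩ hc'))

end Aux11b



section Aux11c

variable (K : Type) [Field K]

theorem exists_min_affine {V : Type} [AddCommGroup V] [Module K V] [FiniteDimensional K V]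
    {ι : Type} [Nonempty ι] (f : ι → AffineSubspace K V)
    (hne : ∀ i, (f i : Set V).Nonempty)
    (hdir : ∀ i j, ∃ m, f m ≤ f i ∧ f m ≤ f j) :
    ∃ i₀, ∀ i, f i₀ ≤ f i := by
  set n : ι → ℕ := fun i => Module.finrank K (f i).direction with hn
  obtain ⟨i₀, hi₀⟩ : ∃ i₀, n i₀ = sInf (Set.range n) := Nat.sInf_mem (Set.range_nonempty n)
  refine ⟨i₀, fun i => ?_⟩
  obtain ⟨m, hm0, hmi⟩ := hdir i₀ i
  have hd : (f m).direction = (f i₀).direction := by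
    refine Submodule.eq_of_le_of_finrank_le (AffineSubspace.direction_le hm0) ?_
    have h' : n i₀ ≤ n m := by
      rw [hi₀]
      exact Nat.sInf_le ⟨m, rfl⟩
    exact h'
  obtain ⟨z, hz⟩ := hne m
  have : f m = f i₀ := AffineSubspace.ext_of_direction_eq hd ⟨z, hz, hm0 hz⟩
  rw [← this]
  exact hmi

variable {X Y : Type} [LinearOrder X] [LinearOrder Y]
variable (M : PersistenceModule K (X × Y))

theorem affmap_mono {V W : Type} [AddCommGroup V] [Module K V] [AddCommGroup W] [Module K W]
    (f : V →ᵃ[K] W) {s s' : AffineSubspace K V} (h : s ≤ s') : s.map f ≤ s'.map f := by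
  intro x hx
  obtain ⟨z, hz, rfl⟩ := AffineSubspace.mem_map.1 hx
  exact AffineSubspace.mem_map.2 ⟨z, h hz, rfl⟩

theorem affmap_le {V W : Type} [AddCommGroup V] [Module K V] [AddCommGroup W] [Module K W]
    (f : V →ᵃ[K] W) {s : AffineSubspace K V} {s' : AffineSubspace K W}
    (h : ∀ x ∈ s, f x ∈ s') : s.map f ≤ s' := by
  intro x hx
  obtain ⟨z, hz, rfl⟩ := AffineSubspace.mem_map.1 hx
  exact h z hz

theorem map_rho_rho {p q u : X × Y} (A : AffineSubspace K (M.obj p))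
    (h1 : p ≤ q) (h2 : q ≤ u) :
    (A.map (rho K M h1).toAffineMap).map (rho K M h2).toAffineMap =
      A.map (rho K M (h1.trans h2)).toAffineMap := by
  rw [AffineSubspace.map_map]
  congr 1
  exact AffineMap.ext fun z => rho_rho K M h1 h2 z

theorem map_rho_rfl {p : X × Y} (A : AffineSubspace K (M.obj p)) (h : p ≤ p) :
    A.map (rho K M h).toAffineMap = A := by
  have : (rho K M h).toAffineMap = AffineMap.id K (M.obj p) := by
    refine AffineMap.ext fun z => ?_
    rw [rho_rfl K M h]
    rfl
  rw [this, AffineSubspace.map_id]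

/-- The key inverse-limit existence result, proved via Zorn's lemma using minimal
families of affine subspaces, the lattice structure of the rectangle, and pointwise
finite-dimensionality. -/
theorem exists_section (hM : Pfd K M) (l r : Cut X) (b t : Cut Y)
    (T : ∀ v : ↥(rectOf l r b t), AffineSubspace K (M.obj v.1))
    (hTne : ∀ v, (T v : Set (M.obj v.1)).Nonempty)
    (hTmap : ∀ (s u : ↥(rectOf l r b t)) (h : s.1 ≤ u.1),
      ∀ x ∈ T s, rho K M h x ∈ T u) :
    ∃ k : ∀ v : ↥(rectOf l r b t), M.obj v.1,
      (∀ (s u : ↥(rectOf l r b t)) (h : s.1 ≤ u.1), rho K M h (k s) = k u) ∧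
      ∀ v, k v ∈ T v := by
  classical
  let Fam := ∀ v : ↥(rectOf l r b t), AffineSubspace K (M.obj v.1)
  let Good : Fam → Prop := fun S =>
    (∀ v, ((S v : Set (M.obj v.1))).Nonempty) ∧
    (∀ (v w : ↥(rectOf l r b t)) (h : v.1 ≤ w.1), ∀ x ∈ S v, rho K M h x ∈ S w) ∧
    (∀ v, S v ≤ T v)
  -- the meet of two elements of the rectangle
  let meet : ↥(rectOf l r b t) → ↥(rectOf l r b t) → ↥(rectOf l r b t) := fun v w =>
    ⟨(min v.1.1 w.1.1, min v.1.2 w.1.2), rect_min_mem v.2 w.2⟩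
  have meet_le_left : ∀ v w, (meet v w).1 ≤ v.1 := fun v w =>
    ⟨min_le_left _ _, min_le_left _ _⟩
  have meet_le_right : ∀ v w, (meet v w).1 ≤ w.1 := fun v w =>
    ⟨min_le_right _ _, min_le_right _ _⟩
  -- Zorn: a minimal good family exists
  have hzorn : ∀ c : Set Famᵒᵈ, c ⊆ {S | Good (OrderDual.ofDual S)} →
      IsChain (· ≤ ·) c → ∃ ub ∈ {S | Good (OrderDual.ofDual S)}, ∀ z ∈ c, z ≤ ub := by
    intro c hcsub hchain
    rcases c.eq_empty_or_nonempty with rfl | ⟨F₀, hF₀⟩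
    · exact ⟨OrderDual.toDual T, ⟨hTne, hTmap, fun v => le_rfl⟩, fun z hz => absurd hz
        (Set.notMem_empty z)⟩
    haveI : Nonempty ↥c := ⟨⟨F₀, hF₀⟩⟩
    have hex : ∀ v : ↥(rectOf l r b t), ∃ i₀ : ↥c, ∀ i : ↥c,
        OrderDual.ofDual i₀.1 v ≤ OrderDual.ofDual i.1 v := by
      intro v
      haveI : FiniteDimensional K (M.obj v.1) := hM v.1
      refine exists_min_affine K (fun i : ↥c => OrderDual.ofDual i.1 v)
        (fun i => (hcsub i.2).1 v) ?_
      intro i j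
      rcases eq_or_ne i.1 j.1 with hij | hij
      · have heq : OrderDual.ofDual i.1 v = OrderDual.ofDual j.1 v := by rw [hij]
        exact ⟨i, le_rfl, le_of_eq heq⟩
      · rcases hchain i.2 j.2 hij with hle | hle
        · have hle' : ∀ v', OrderDual.ofDual j.1 v' ≤ OrderDual.ofDual i.1 v' := hle
          exact ⟨j, hle' v, le_rfl⟩
        · have hle' : ∀ v', OrderDual.ofDual i.1 v' ≤ OrderDual.ofDual j.1 v' := hle
          exact ⟨i, le_rfl, hle' v⟩
    choose idx hidx using hex
    set B : Fam := fun v => OrderDual.ofDual (idx v).1 v with hBdef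
    have hBle : ∀ (F : Famᵒᵈ), F ∈ c → ∀ v, B v ≤ OrderDual.ofDual F v :=
      fun F hF v => hidx v ⟨F, hF⟩
    have hBgood : Good B := by
      refine ⟨fun v => (hcsub (idx v).2).1 v, ?_, fun v =>
        le_trans (hBle _ (idx v).2 v) ((hcsub (idx v).2).2.2 v)⟩
      intro v w h x hx
      -- find a member H of the chain below both minimizers
      have hHd : ∃ Hd : ↥c, (∀ v', OrderDual.ofDual Hd.1 v' ≤ OrderDual.ofDual (idx v).1 v') ∧
          (∀ v', OrderDual.ofDual Hd.1 v' ≤ OrderDual.ofDual (idx w).1 v') := by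
        rcases eq_or_ne ((idx v).1 : Famᵒᵈ) ((idx w).1 : Famᵒᵈ) with hvw | hvw
        · exact ⟨idx v, fun v' => le_rfl, fun v' => le_of_eq (by rw [hvw])⟩
        · rcases hchain (idx v).2 (idx w).2 hvw with hle | hle
          · have hle' : ∀ v', OrderDual.ofDual (idx w).1 v' ≤
                OrderDual.ofDual (idx v).1 v' := hle
            exact ⟨idx w, hle', fun v' => le_rfl⟩
          · have hle' : ∀ v', OrderDual.ofDual (idx v).1 v' ≤
                OrderDual.ofDual (idx w).1 v' := hle
            exact ⟨idx v, fun v' => le_rfl, hle'⟩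
      obtain ⟨Hd, hHv, hHw⟩ := hHd
      have hBv : B v = OrderDual.ofDual Hd.1 v :=
        le_antisymm (hBle _ Hd.2 v) (hHv v)
      have hx' : x ∈ OrderDual.ofDual Hd.1 v := hBv ▸ hx
      have : rho K M h x ∈ OrderDual.ofDual Hd.1 w := (hcsub Hd.2).2.1 v w h x hx'
      exact hHw w this
    refine ⟨OrderDual.toDual B, hBgood, fun z hz => fun v => hBle z hz v⟩
  obtain ⟨Sd, hSd⟩ := zorn_le₀ {S : Famᵒᵈ | Good (OrderDual.ofDual S)} hzorn
  set S : Fam := OrderDual.ofDual Sd with hSdef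
  have hGood : Good S := hSd.1
  have hminimal : ∀ S' : Fam, Good S' → (∀ v, S' v ≤ S v) → ∀ v, S v ≤ S' v := by
    intro S' hS' hle
    have h1 : Sd ≤ OrderDual.toDual S' := fun v => hle v
    have h2 := hSd.2 (y := OrderDual.toDual S') hS' h1
    exact fun v => h2 v
  -- Step 1: the minimal family satisfies S u ⊆ ρ_s^u (S s) for all s ≤ u
  have hstep1 : ∀ (u s : ↥(rectOf l r b t)) (h : s.1 ≤ u.1),
      S u ≤ (S s).map (rho K M h).toAffineMap := by
    have hex : ∀ u : ↥(rectOf l r b t), ∃ i₀ : {s : ↥(rectOf l r b t) // s.1 ≤ u.1},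
        ∀ i : {s : ↥(rectOf l r b t) // s.1 ≤ u.1},
          (S i₀.1).map (rho K M i₀.2).toAffineMap ≤ (S i.1).map (rho K M i.2).toAffineMap := by
      intro u
      haveI : FiniteDimensional K (M.obj u.1) := hM u.1
      haveI : Nonempty {s : ↥(rectOf l r b t) // s.1 ≤ u.1} := ⟨⟨u, le_rfl⟩⟩
      refine exists_min_affine K _ (fun i => ?_) (fun i j => ?_)
      · obtain ⟨z, hz⟩ := hGood.1 i.1
        exact ⟨rho K M i.2 z, AffineSubspace.mem_map.2 ⟨z, hz, rfl⟩⟩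
      · refine ⟨⟨meet i.1 j.1, (meet_le_left _ _).trans i.2⟩, ?_, ?_⟩
        · exact le_trans (le_of_eq (map_rho_rho K M _ (meet_le_left i.1 j.1) i.2).symm)
            (affmap_mono K _ (affmap_le K _
              (fun z hz => hGood.2.1 _ _ (meet_le_left i.1 j.1) z hz)))
        · exact le_trans (le_of_eq (map_rho_rho K M _ (meet_le_right i.1 j.1) j.2).symm)
            (affmap_mono K _ (affmap_le K _
              (fun z hz => hGood.2.1 _ _ (meet_le_right i.1 j.1) z hz)))
    choose gidx hgidx using hex
    set S' : Fam := fun u => (S (gidx u).1).map (rho K M (gidx u).2).toAffineMap with hS'def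
    have hS'S : ∀ u, S' u ≤ S u := by
      intro u
      have := hgidx u ⟨u, le_rfl⟩
      rwa [map_rho_rfl K M (S u) le_rfl] at this
    have hS'good : Good S' := by
      refine ⟨?_, ?_, fun u => (hS'S u).trans (hGood.2.2 u)⟩
      · intro u
        obtain ⟨z, hz⟩ := hGood.1 (gidx u).1
        exact ⟨rho K M (gidx u).2 z, AffineSubspace.mem_map.2 ⟨z, hz, rfl⟩⟩
      · intro v w h x hx
        -- S' v ≤ map of S at meet (gidx w) v; push forward
        set q : ↥(rectOf l r b t) := meet (gidx w).1 v with hq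
        have h1 : S' v ≤ (S q).map (rho K M ((meet_le_right (gidx w).1 v))).toAffineMap :=
          hgidx v ⟨q, meet_le_right (gidx w).1 v⟩
        obtain ⟨z, hz, hzx⟩ := AffineSubspace.mem_map.1 (h1 hx)
        have hzw : rho K M ((meet_le_left (gidx w).1 v).trans (gidx w).2)
            z ∈ S' w := by
          refine AffineSubspace.mem_map.2 ⟨rho K M (meet_le_left (gidx w).1 v) z, ?_, ?_⟩
          · exact hGood.2.1 q (gidx w).1 (meet_le_left (gidx w).1 v) z hz
          · exact rho_rho K M _ _ z
        have : rho K M h x = rho K M ((meet_le_left (gidx w).1 v).trans (gidx w).2) z := by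
          calc rho K M h x = rho K M h (rho K M (meet_le_right (gidx w).1 v) z) := by
                rw [show rho K M (meet_le_right (gidx w).1 v) z = x from hzx]
            _ = rho K M ((meet_le_right (gidx w).1 v).trans h) z := rho_rho K M _ _ z
            _ = rho K M ((meet_le_left (gidx w).1 v).trans (gidx w).2) z := rfl
        rw [this]
        exact hzw
    intro u s h
    exact le_trans (hminimal S' hS'good hS'S u) (hgidx u ⟨s, h⟩)
  -- Step 2 (pinning): every S u₀ is a singleton
  have huniq : ∀ (u₀ : ↥(rectOf l r b t)) (x : M.obj u₀.1), x ∈ S u₀ →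
      ∀ y ∈ S u₀, y = x := by
    intro u₀ x hx y hy
    let join : ↥(rectOf l r b t) → ↥(rectOf l r b t) := fun v =>
      ⟨(max v.1.1 u₀.1.1, max v.1.2 u₀.1.2), rect_max_mem v.2 u₀.2⟩
    have hvj : ∀ v, v.1 ≤ (join v).1 := fun v => ⟨le_max_left _ _, le_max_left _ _⟩
    have huj : ∀ v, u₀.1 ≤ (join v).1 := fun v => ⟨le_max_right _ _, le_max_right _ _⟩
    set S'' : Fam := fun v => S v ⊓ AffineSubspace.comap (rho K M (hvj v)).toAffineMap
      (AffineSubspace.mk' (rho K M (huj v) x) (⊥ : Submodule K (M.obj (join v).1))) with hS''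
    have hmemS'' : ∀ (v : ↥(rectOf l r b t)) (z : M.obj v.1),
        z ∈ S'' v ↔ z ∈ S v ∧ rho K M (hvj v) z = rho K M (huj v) x := by
      intro v z
      rw [AffineSubspace.mem_inf_iff, AffineSubspace.mem_comap,
        AffineSubspace.mem_mk']
      constructor
      · rintro ⟨h1, h2⟩
        refine ⟨h1, ?_⟩
        have : (rho K M (hvj v)).toAffineMap z -ᵥ rho K M (huj v) x = 0 :=
          (Submodule.mem_bot K).1 h2
        rw [vsub_eq_sub, sub_eq_zero] at this
        exact this
      · rintro ⟨h1, h2⟩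
        refine ⟨h1, (Submodule.mem_bot K).2 ?_⟩
        rw [vsub_eq_sub, sub_eq_zero]
        exact h2
    have hS''S : ∀ v, S'' v ≤ S v := fun v => inf_le_left
    have hS''good : Good S'' := by
      refine ⟨?_, ?_, fun v => (hS''S v).trans (hGood.2.2 v)⟩
      · intro v
        set q : ↥(rectOf l r b t) := meet v u₀ with hqdef
        obtain ⟨z, hz, hzx⟩ := AffineSubspace.mem_map.1
          (hstep1 u₀ q (meet_le_right v u₀) hx)
        refine ⟨rho K M (meet_le_left v u₀) z, (hmemS'' v _).2 ⟨?_, ?_⟩⟩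
        · exact hGood.2.1 q v (meet_le_left v u₀) z hz
        · calc rho K M (hvj v) (rho K M (meet_le_left v u₀) z)
              = rho K M ((meet_le_left v u₀).trans (hvj v)) z := rho_rho K M _ _ z
            _ = rho K M (huj v) (rho K M (meet_le_right v u₀) z) := (rho_rho K M _ _ z).symm
            _ = rho K M (huj v) x := by
                rw [show rho K M (meet_le_right v u₀) z = x from hzx]
      · intro v w h z hz
        obtain ⟨hz1, hz2⟩ := (hmemS'' v z).1 hz
        refine (hmemS'' w _).2 ⟨hGood.2.1 v w h z hz1, ?_⟩
        have hjj : (join v).1 ≤ (join w).1 :=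
          ⟨max_le_max h.1 le_rfl, max_le_max h.2 le_rfl⟩
        calc rho K M (hvj w) (rho K M h z)
            = rho K M (h.trans (hvj w)) z := rho_rho K M _ _ z
          _ = rho K M hjj (rho K M (hvj v) z) := (rho_rho K M _ _ z).symm
          _ = rho K M hjj (rho K M (huj v) x) := by rw [hz2]
          _ = rho K M ((huj v).trans hjj) x := rho_rho K M _ _ x
          _ = rho K M (huj w) x := rfl
    have hySS : y ∈ S'' u₀ := hminimal S'' hS''good hS''S u₀ hy
    have hkey : ∀ (p : X × Y) (hp : p = u₀.1) (h' : u₀.1 ≤ p),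
        rho K M h' y = rho K M h' x → y = x := by
      rintro p rfl h' hE
      rw [rho_rfl K M h'] at hE
      simpa using hE
    have hpj : ((join u₀).1 : X × Y) = u₀.1 := by
      show ((max u₀.1.1 u₀.1.1, max u₀.1.2 u₀.1.2) : X × Y) = u₀.1
      rw [max_self, max_self]
    exact hkey _ hpj (hvj u₀) ((hmemS'' u₀ y).1 hySS).2
  -- conclude: the (singleton) values of S give the desired section
  refine ⟨fun v => (hGood.1 v).choose, ?_, fun v => hGood.2.2 v (hGood.1 v).choose_spec⟩
  intro s u h
  have h1 : rho K M h (hGood.1 s).choose ∈ S u :=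
    hGood.2.1 s u h _ (hGood.1 s).choose_spec
  exact huniq u _ (hGood.1 u).choose_spec _ h1
end Aux11c


/-- **Statement 11.** Under the linking condition `Ker⁺_{r,s} ∩ Ker⁺_{t,s} ⊆ Im⁺_{R,s}` on `R`,
there is a vector space complement `W` of `L⁻` in `L⁺` whose projections define a submodule
of `M`. -/
theorem exists_complement_defining_submodule
    (K : Type) [Field K] (X Y : Type) [LinearOrder X] [LinearOrder Y]
    (hX : ∃ C : Set X, C.Countable ∧ ∀ x : X, ∃ c ∈ C, c ≤ x)
    (hY : ∃ C : Set Y, C.Countable ∧ ∀ y : Y, ∃ c ∈ C, c ≤ y)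
    (M : PersistenceModule K (X × Y)) (hM : Pfd K M) (hwe : WeaklyExact K M)
    (l r : Cut X) (b t : Cut Y)
    (hcond : ∀ s ∈ rectOf l r b t,
      KerPlusH K M r s ⊓ KerPlusV K M t s ≤ ImPlusR K M l b s) :
    ∃ W : Submodule K (∀ v : ↥(rectOf l r b t), M.obj v.1),
      W ≤ limVplus K M l r b t ∧
      W ⊓ limVminus K M l r b t = ⊥ ∧
      W ⊔ limVminus K M l r b t = limVplus K M l r b t ∧
      ∀ (s u : X × Y) (h : s ≤ u),
        Submodule.map (rho K M h) (filtrateFam K M (rectOf l r b t) W s) ≤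
          filtrateFam K M (rectOf l r b t) W u := by
  classical
  have hkey : limVplus K M l r b t ≤ limVminus K M l r b t ⊔
      (limVplus K M l r b t ⊓ Submodule.pi Set.univ
        (fun v : ↥(rectOf l r b t) => KerPlusH K M r v.1 ⊓ KerPlusV K M t v.1)) := by
    intro w hw
    obtain ⟨hwc, hwp⟩ := Submodule.mem_inf.1 hw
    have hwp' : ∀ v : ↥(rectOf l r b t), w v ∈ VplusAt K M l r b t v.1 := fun v =>
      Submodule.mem_pi.1 hwp v (Set.mem_univ v)
    set T : ∀ v : ↥(rectOf l r b t), AffineSubspace K (M.obj v.1) := fun v =>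
      AffineSubspace.mk' 0 (VplusAt K M l r b t v.1 ⊓
        (KerPlusH K M r v.1 ⊓ KerPlusV K M t v.1)) ⊓
      AffineSubspace.mk' (w v) (VminusAt K M l r b t v.1) with hTdef
    have hmemT : ∀ (v : ↥(rectOf l r b t)) (z : M.obj v.1), z ∈ T v ↔
        (z ∈ VplusAt K M l r b t v.1 ⊓ (KerPlusH K M r v.1 ⊓ KerPlusV K M t v.1)) ∧
          z - w v ∈ VminusAt K M l r b t v.1 := by
      intro v z
      rw [AffineSubspace.mem_inf_iff, AffineSubspace.mem_mk',
        AffineSubspace.mem_mk']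
      constructor
      · rintro ⟨h1, h2⟩
        have h1' : z - 0 ∈ _ := h1
        rw [sub_zero] at h1'
        exact ⟨h1', h2⟩
      · rintro ⟨h1, h2⟩
        refine ⟨?_, h2⟩
        show z -ᵥ 0 ∈ _
        rwa [vsub_eq_sub, sub_zero]
    have hTne : ∀ v, ((T v : Set (M.obj v.1))).Nonempty := by
      intro v
      obtain ⟨k, ⟨hk1, hk2, hk3⟩, hk4⟩ := VplusAt_decomp K M l r b t hwe v.2
        (hcond v.1 v.2) (hwp' v)
      refine ⟨k, (hmemT v k).2 ⟨Submodule.mem_inf.2 ⟨hk1, Submodule.mem_inf.2 ⟨hk2, hk3⟩⟩, ?_⟩⟩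
      have : k - w v = -(w v - k) := by abel
      rw [this]
      exact neg_mem hk4
    have hTmap : ∀ (s u : ↥(rectOf l r b t)) (h : s.1 ≤ u.1),
        ∀ x ∈ T s, rho K M h x ∈ T u := by
      intro s u h x hx
      obtain ⟨hx1, hx2⟩ := (hmemT s x).1 hx
      obtain ⟨hxa, hxb⟩ := Submodule.mem_inf.1 hx1
      obtain ⟨hxb1, hxb2⟩ := Submodule.mem_inf.1 hxb
      refine (hmemT u _).2 ⟨Submodule.mem_inf.2 ⟨?_, Submodule.mem_inf.2 ⟨?_, ?_⟩⟩, ?_⟩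
      · exact rho_mem_VplusAt K M l r b t hwe s.2 u.2 h hxa
      · exact rho_mem_KerPlusH K M r h hxb1
      · exact rho_mem_KerPlusV K M t h hxb2
      · have hwu : rho K M h (w s) = w u := hwc s u h
        have : rho K M h x - w u = rho K M h (x - w s) := by
          rw [map_sub, hwu]
        rw [this]
        exact rho_mem_VminusAt K M l r b t hwe s.2 u.2 h hx2
    obtain ⟨k, hkcompat, hkT⟩ := exists_section K M hM l r b t T hTne hTmap
    have hkmem : ∀ v, (k v ∈ VplusAt K M l r b t v.1 ⊓
        (KerPlusH K M r v.1 ⊓ KerPlusV K M t v.1)) ∧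
        k v - w v ∈ VminusAt K M l r b t v.1 := fun v => (hmemT v (k v)).1 (hkT v)
    have hkC : k ∈ limVplus K M l r b t ⊓ Submodule.pi Set.univ
        (fun v : ↥(rectOf l r b t) => KerPlusH K M r v.1 ⊓ KerPlusV K M t v.1) := by
      refine Submodule.mem_inf.2 ⟨Submodule.mem_inf.2 ⟨?_, ?_⟩, ?_⟩
      · exact fun s u h => hkcompat s u h
      · exact Submodule.mem_pi.2 fun v _ => (Submodule.mem_inf.1 (hkmem v).1).1
      · exact Submodule.mem_pi.2 fun v _ => (Submodule.mem_inf.1 (hkmem v).1).2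
    have hwk : w - k ∈ limVminus K M l r b t := by
      refine Submodule.mem_inf.2 ⟨Submodule.mem_inf.2 ⟨?_, ?_⟩, ?_⟩
      · intro s u h
        show rho K M h ((w - k) s) = (w - k) u
        rw [Pi.sub_apply, Pi.sub_apply, map_sub, hwc s u h, hkcompat s u h]
      · refine Submodule.mem_pi.2 fun v _ => ?_
        show w v - k v ∈ _
        exact sub_mem (hwp' v) (Submodule.mem_inf.1 (hkmem v).1).1
      · refine Submodule.mem_pi.2 fun v _ => ?_
        show w v - k v ∈ _
        have : w v - k v = -(k v - w v) := by abel
        rw [this]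
        exact neg_mem (hkmem v).2
    have hsum : w = (w - k) + k := by abel
    rw [hsum]
    exact Submodule.add_mem_sup hwk hkC
  set C : Submodule K (∀ v : ↥(rectOf l r b t), M.obj v.1) :=
    limVplus K M l r b t ⊓ Submodule.pi Set.univ
      (fun v : ↥(rectOf l r b t) => KerPlusH K M r v.1 ⊓ KerPlusV K M t v.1) with hCdef
  obtain ⟨q, hq⟩ := Submodule.exists_isCompl
    (Submodule.comap C.subtype (limVminus K M l r b t ⊓ C))
  refine ⟨Submodule.map C.subtype q, ?_, ?_, ?_, ?_⟩
  case _ => exact (Submodule.map_subtype_le C q).trans inf_le_left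
  case _ =>
    rw [eq_bot_iff]
    intro x hx
    obtain ⟨hxW, hxm⟩ := Submodule.mem_inf.1 hx
    obtain ⟨y, hy, rfl⟩ := hxW
    have hyc : y ∈ Submodule.comap C.subtype (limVminus K M l r b t ⊓ C) :=
      Submodule.mem_comap.2 (Submodule.mem_inf.2 ⟨hxm, y.2⟩)
    have : y ∈ Submodule.comap C.subtype (limVminus K M l r b t ⊓ C) ⊓ q :=
      Submodule.mem_inf.2 ⟨hyc, hy⟩
    rw [hq.inf_eq_bot] at this
    rw [(Submodule.mem_bot K).1 this]
    simp
  case _ =>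
    have h1 : Submodule.map C.subtype
        (Submodule.comap C.subtype (limVminus K M l r b t ⊓ C)) =
        limVminus K M l r b t ⊓ C := by
      rw [Submodule.map_comap_subtype]
      rw [inf_comm C _, inf_assoc, inf_idem]
    have hCeq : (limVminus K M l r b t ⊓ C) ⊔ Submodule.map C.subtype q = C := by
      rw [← h1, ← Submodule.map_sup, hq.sup_eq_top, Submodule.map_top,
        Submodule.range_subtype]
    refine le_antisymm (sup_le ((Submodule.map_subtype_le C q).trans inf_le_left)
      inf_le_left) ?_
    refine hkey.trans (sup_le le_sup_right ?_)
    exact le_trans (le_of_eq hCeq.symm)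
      (sup_le (inf_le_left.trans le_sup_right) le_sup_left)
  case _ =>
    intro s u h
    intro z hz
    obtain ⟨x, hx, rfl⟩ := Submodule.mem_map.1 hz
    by_cases hs : s ∈ rectOf l r b t
    · have hx' : x ∈ ⨆ (h' : s ∈ rectOf l r b t),
          Submodule.map (projAt K M (rectOf l r b t) s h') (Submodule.map C.subtype q) := hx
      rw [iSup_pos hs] at hx'
      obtain ⟨wv, hwv, rfl⟩ := Submodule.mem_map.1 hx'
      have hwvC : wv ∈ C := Submodule.map_subtype_le C q hwv
      have hwvcompat : wv ∈ compatSections K M (rectOf l r b t) :=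
        (Submodule.mem_inf.1 (Submodule.mem_inf.1 hwvC).1).1
      by_cases hu : u ∈ rectOf l r b t
      · have heq : rho K M h (projAt K M (rectOf l r b t) s hs wv) = wv ⟨u, hu⟩ :=
          hwvcompat ⟨s, hs⟩ ⟨u, hu⟩ h
        have hgoal : rho K M h (projAt K M (rectOf l r b t) s hs wv) ∈
            Submodule.map (projAt K M (rectOf l r b t) u hu) (Submodule.map C.subtype q) := by
          rw [heq]
          exact ⟨wv, hwv, rfl⟩
        show _ ∈ ⨆ (h' : u ∈ rectOf l r b t),
          Submodule.map (projAt K M (rectOf l r b t) u h') (Submodule.map C.subtype q)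
        rw [iSup_pos hu]
        exact hgoal
      · have hker : wv ⟨s, hs⟩ ∈ KerPlusH K M r s ⊓ KerPlusV K M t s :=
          Submodule.mem_pi.1 (Submodule.mem_inf.1 hwvC).2 ⟨s, hs⟩ (Set.mem_univ _)
        have hu1 : u.1 ∈ l.upper := l.mem_upper_of_le hs.1.1 h.1
        have hu2 : u.2 ∈ b.upper := b.mem_upper_of_le hs.2.1 h.2
        have hcase : u.1 ∈ r.upper ∨ u.2 ∈ t.upper := by
          by_contra hcon
          push_neg at hcon
          have hr : u.1 ∈ r.lower := by
            have hmem : u.1 ∈ r.lower ∪ r.upper := by rw [r.union_eq]; trivial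
            rcases hmem with hm | hm
            · exact hm
            · exact absurd hm hcon.1
          have ht' : u.2 ∈ t.lower := by
            have hmem : u.2 ∈ t.lower ∪ t.upper := by rw [t.union_eq]; trivial
            rcases hmem with hm | hm
            · exact hm
            · exact absurd hm hcon.2
          exact hu ⟨⟨hu1, hr⟩, hu2, ht'⟩
        have hzero : rho K M h (projAt K M (rectOf l r b t) s hs wv) = 0 := by
          rcases hcase with hru | htu
          · have h0 := (mem_KerPlusH K M).1 (Submodule.mem_inf.1 hker).1 u.1 ⟨hru, h.1⟩
            calc rho K M h (wv ⟨s, hs⟩)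
                = rho K M (show ((u.1, s.2) : X × Y) ≤ u from ⟨le_rfl, h.2⟩)
                  (rho K M (show s ≤ ((u.1, s.2) : X × Y) from ⟨h.1, le_rfl⟩)
                    (wv ⟨s, hs⟩)) := (rho_rho K M _ _ _).symm
              _ = 0 := by rw [h0, map_zero]
          · have h0 := (mem_KerPlusV K M).1 (Submodule.mem_inf.1 hker).2 u.2 ⟨htu, h.2⟩
            calc rho K M h (wv ⟨s, hs⟩)
                = rho K M (show ((s.1, u.2) : X × Y) ≤ u from ⟨h.1, le_rfl⟩)
                  (rho K M (show s ≤ ((s.1, u.2) : X × Y) from ⟨le_rfl, h.2⟩)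
                    (wv ⟨s, hs⟩)) := (rho_rho K M _ _ _).symm
              _ = 0 := by rw [h0, map_zero]
        rw [hzero]
        exact Submodule.zero_mem _
    · have hx' : x ∈ ⨆ (h' : s ∈ rectOf l r b t),
          Submodule.map (projAt K M (rectOf l r b t) s h') (Submodule.map C.subtype q) := hx
      rw [iSup_neg hs] at hx'
      rw [(Submodule.mem_bot K).1 hx', map_zero]
      exact Submodule.zero_mem _
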